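/- Let n ≥ 1 and let A be an n×n real matrix such that every row sum of A is zero and every column sum of A is zero. Then all cofactors of A are equal: for all i, j, i', j' ∈ [n], (−1)^{i+j} det A^{(i,j)} = (−1)^{i'+j'} det A^{(i',j')}. -/
import Mathlib

open Matrix

/-- A square real matrix all of whose row sums vanish has zero determinant. -/
lemma det_zero_of_row_sums {n : ℕ} (M : Matrix (Fin (n + 1)) (Fin (n + 1)) ℝ)
    (h : ∀ i, ∑ j, M i j = 0) : M.det = 0 := by
  rw [← Matrix.exists_mulVec_eq_zero_iff]
  refine ⟨fun _ => 1, ?_, ?_⟩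
  · intro hv
    have := congrFun hv 0
    simp at this
  · funext i
    simpa [Matrix.mulVec, dotProduct] using h i

/-- If all row sums of `A` vanish, the adjugate is constant along its first index. -/
lemma adjugate_fst_const {n : ℕ} (A : Matrix (Fin (n + 1)) (Fin (n + 1)) ℝ)
    (hrow : ∀ i, ∑ j, A i j = 0) (j j' i : Fin (n + 1)) :
    A.adjugate j i = A.adjugate j' i := by
  have key : ∀ (u v : Fin (n + 1) → ℝ), (∑ k, u k) = (∑ k, v k) →
      (A.updateRow i u).det = (A.updateRow i v).det := by
    intro u v huv
    have h1 : (A.updateRow i (u - v)).det = 0 := by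
      apply det_zero_of_row_sums
      intro k
      by_cases hk : k = i
      · subst hk
        simp [Finset.sum_sub_distrib, huv]
      · simp [Matrix.updateRow_ne hk, hrow k]
    have h2 : (A.updateRow i ((u - v) + v)).det
        = (A.updateRow i (u - v)).det + (A.updateRow i v).det :=
      Matrix.det_updateRow_add A i (u - v) v
    simpa [h1, sub_add_cancel] using h2
  rw [Matrix.adjugate_apply, Matrix.adjugate_apply]
  exact key _ _ (by simp)

/-- **Zero-line-sum matrices have equal cofactors.**
If every row sum and every column sum of an `(n+1) × (n+1)` real matrix `A` is zero,
then all cofactors of `A` agree: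
`(-1)^(i+j) det A^{(i,j)} = (-1)^(i'+j') det A^{(i',j')}`,
where `A^{(i,j)}` is obtained from `A` by deleting row `i` and column `j`. -/
theorem zls_equal_cofactors (n : ℕ) (A : Matrix (Fin (n + 1)) (Fin (n + 1)) ℝ)
    (hrow : ∀ i, ∑ j, A i j = 0) (hcol : ∀ j, ∑ i, A i j = 0)
    (i j i' j' : Fin (n + 1)) :
    (-1 : ℝ) ^ ((i : ℕ) + (j : ℕ)) * (A.submatrix i.succAbove j.succAbove).det
      = (-1 : ℝ) ^ ((i' : ℕ) + (j' : ℕ)) * (A.submatrix i'.succAbove j'.succAbove).det := by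
  have e : ∀ (a b : Fin (n + 1)),
      (-1 : ℝ) ^ ((a : ℕ) + (b : ℕ)) * (A.submatrix a.succAbove b.succAbove).det
        = A.adjugate b a := fun a b =>
    (Matrix.adjugate_fin_succ_eq_det_submatrix A b a).symm
  rw [e, e]
  have hT : ∀ a b b', A.adjugate a b = A.adjugate a b' := by
    intro a b b'
    have := adjugate_fst_const Aᵀ (by simpa [Matrix.transpose_apply] using hcol) b b' a
    rwa [← Matrix.adjugate_transpose, Matrix.transpose_apply, Matrix.transpose_apply] at this
  calc A.adjugate j i = A.adjugate j' i := adjugate_fst_const A hrow j j' i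
    _ = A.adjugate j' i' := hT j' i i'
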